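/- Let F be a field, n > 0, and M be a trivial spectrum linear subspace of n×n matrices over F. Then there exists an index i ∈ {1, …, n} such that the i-th standard basis vector e_i of F^n is M-adapted, i.e., M contains no nonzero matrix whose column space (range) equals the line F·e_i. -/

import Mathlib

private lemma cycle_core {n : ℕ} (hn : 0 < n) (r : Fin n → Fin n → Prop)
    (hirr : ∀ i, ¬ r i i) (hser : ∀ i, ∃ j, r i j) :
    ∃ k, 0 < k ∧ ∃ σ : ℕ → Fin n,
      (∀ t, σ (t + k) = σ t) ∧ (∀ t, r (σ t) (σ (t + 1))) ∧
      (∀ a c, a < c → c < k → σ a ≠ σ c) ∧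
      (∀ t s, t < k → s < k → s ≠ (t + 1) % k → ¬ r (σ t) (σ s)) := by
  classical
  choose f hf using hser
  -- a periodic point of f
  obtain ⟨x, m, hm, hfx⟩ : ∃ (x : Fin n) (m : ℕ), 0 < m ∧ f^[m] x = x := by
    have x0 : Fin n := ⟨0, hn⟩
    have hcard : Fintype.card (Fin n) < Fintype.card (Fin (n+1)) := by simp
    obtain ⟨a, c, hac, heq⟩ := Fintype.exists_ne_map_eq_of_card_lt
      (fun j : Fin (n+1) => f^[(j : ℕ)] x0) hcard
    rcases Ne.lt_or_gt hac with h | h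
    · refine ⟨f^[(a:ℕ)] x0, (c : ℕ) - (a : ℕ), by omega, ?_⟩
      rw [← Function.iterate_add_apply]
      rw [show (c:ℕ) - (a:ℕ) + (a:ℕ) = (c:ℕ) by omega]
      exact heq.symm
    · refine ⟨f^[(c:ℕ)] x0, (a : ℕ) - (c : ℕ), by omega, ?_⟩
      rw [← Function.iterate_add_apply]
      rw [show (a:ℕ) - (c:ℕ) + (c:ℕ) = (a:ℕ) by omega]
      exact heq
  set P : ℕ → Prop := fun k => 0 < k ∧ ∃ σ : ℕ → Fin n,
      (∀ t, σ (t + k) = σ t) ∧ (∀ t, r (σ t) (σ (t + 1))) with hP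
  have hPm : P m := by
    refine ⟨hm, fun t => f^[t] x, fun t => ?_, fun t => ?_⟩
    · show f^[t + m] x = f^[t] x
      rw [Function.iterate_add_apply, hfx]
    · show r (f^[t] x) (f^[t + 1] x)
      rw [Function.iterate_succ_apply']
      exact hf _
  have hex : ∃ k, P k := ⟨m, hPm⟩
  set k := Nat.find hex with hk
  obtain ⟨hkpos, σ, hp, he⟩ : P k := Nat.find_spec hex
  have hmin : ∀ k', k' < k → ¬ P k' := fun k' h => Nat.find_min hex h
  -- injectivity on [0, k)
  have hinj : ∀ a c, a < c → c < k → σ a ≠ σ c := by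
    intro a c hac hck heq
    set k' := c - a with hk'
    refine hmin k' (by omega) ⟨by omega, fun u => σ (a + u % k'), fun u => ?_, fun u => ?_⟩
    · show σ (a + (u + k') % k') = σ (a + u % k')
      rw [Nat.add_mod_right]
    · show r (σ (a + u % k')) (σ (a + (u + 1) % k'))
      set v := u % k' with hv
      have hvk : v < k' := Nat.mod_lt _ (by omega)
      have h1 : (u + 1) % k' = (v + 1) % k' := (Nat.mod_add_mod u k' 1).symm
      rcases Nat.lt_or_ge (v + 1) k' with h2 | h2
      · rw [h1, Nat.mod_eq_of_lt h2, ← Nat.add_assoc]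
        exact he _
      · have h3 : v + 1 = k' := by omega
        rw [h1, h3, Nat.mod_self, Nat.add_zero, heq,
          show c = (a + v) + 1 by omega]
        exact he _
  have hk2 : 2 ≤ k := by
    rcases Nat.lt_or_ge k 2 with h | h
    · exfalso
      have h1 : k = 1 := by omega
      have := he 0
      rw [show (0 + 1 : ℕ) = 0 + k by omega, hp 0] at this
      exact hirr _ this
    · exact h
  refine ⟨k, hkpos, σ, hp, he, hinj, ?_⟩
  -- chordless
  intro t s ht hs hne hr
  set d := (t + k - s) % k with hd
  have hsd : σ (s + d) = σ t := by
    rcases le_or_gt s t with h | h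
    · have : d = t - s := by
        rw [hd, show t + k - s = (t - s) + k by omega, Nat.add_mod_right,
          Nat.mod_eq_of_lt (by omega)]
      rw [this, show s + (t - s) = t by omega]
    · have : d = t + k - s := by
        rw [hd, Nat.mod_eq_of_lt (by omega)]
      rw [this, show s + (t + k - s) = t + k by omega, hp]
  have hdk : d + 1 < k := by
    rcases le_or_gt s t with h | h
    · have hdts : d = t - s := by
        rw [hd, show t + k - s = (t - s) + k by omega, Nat.add_mod_right,
          Nat.mod_eq_of_lt (by omega)]
      rcases Nat.lt_or_ge (t + 1) k with h2 | h2
      · omega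
      · -- t + 1 = k, so (t+1) % k = 0, hence s ≠ 0
        have h3 : t + 1 = k := by omega
        have h4 : (t + 1) % k = 0 := by rw [h3, Nat.mod_self]
        have h5 : s ≠ 0 := by rw [h4] at hne; exact hne
        omega
    · have hdts : d = t + k - s := by rw [hd, Nat.mod_eq_of_lt (by omega)]
      have h5 : s ≠ t + 1 := by
        intro h6
        exact hne (by rw [h6, Nat.mod_eq_of_lt (by omega)])
      omega
  set k' := d + 1 with hk'
  refine hmin k' (by omega) ⟨by omega, fun u => σ (s + u % k'), fun u => ?_, fun u => ?_⟩
  · show σ (s + (u + k') % k') = σ (s + u % k')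
    rw [Nat.add_mod_right]
  · show r (σ (s + u % k')) (σ (s + (u + 1) % k'))
    set v := u % k' with hv
    have hvk : v < k' := Nat.mod_lt _ (by omega)
    have h1 : (u + 1) % k' = (v + 1) % k' := (Nat.mod_add_mod u k' 1).symm
    rcases Nat.lt_or_ge (v + 1) k' with h2 | h2
    · rw [h1, Nat.mod_eq_of_lt h2, ← Nat.add_assoc]
      exact he _
    · have h3 : v = d := by omega
      rw [h1, show v + 1 = k' by omega, Nat.mod_self, Nat.add_zero, h3, hsd]
      exact hr

/-- If M is a trivial spectrum linear subspace of n×n matrices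
over a field F (no element of M has a nonzero eigenvalue in F), then some
standard basis vector e_i of F^n is M-adapted, i.e. M contains no nonzero
matrix whose column space equals the line F·e_i. -/
theorem stmt_16 (F : Type) [Field F] (n : ℕ) (hn : 0 < n)
    (M : Submodule F (Matrix (Fin n) (Fin n) F))
    (hM : ∀ A ∈ M, ∀ μ : F, μ ≠ 0 → ∀ X : Fin n → F, A.mulVec X = μ • X → X = 0) :
    ∃ i : Fin n, ∀ A ∈ M, A ≠ 0 →
      LinearMap.range A.mulVecLin ≠ Submodule.span F {Pi.single i (1 : F)} := by
  classical
  by_contra h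
  push_neg at h
  have key : ∀ i : Fin n, ∃ b : Fin n → F, (∃ j, b j ≠ 0) ∧ b i = 0 ∧
      ∃ A, A ∈ M ∧ ∀ x : Fin n → F, A.mulVec x = (∑ j, b j * x j) • (Pi.single i 1 : Fin n → F) := by
    intro i
    obtain ⟨A, hAM, hA0, hrange⟩ := h i
    have hmv : ∀ x : Fin n → F,
        A.mulVec x = (∑ j, A i j * x j) • (Pi.single i 1 : Fin n → F) := by
      intro x
      have hx : A.mulVec x ∈ LinearMap.range A.mulVecLin := ⟨x, rfl⟩
      rw [hrange, Submodule.mem_span_singleton] at hx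
      obtain ⟨c, hc⟩ := hx
      have hci : c = A.mulVec x i := by rw [← hc]; simp
      have hsum : A.mulVec x i = ∑ j, A i j * x j := by
        simp [Matrix.mulVec, dotProduct]
      rw [← hc, hci, hsum]
    refine ⟨A i, ?_, ?_, A, hAM, hmv⟩
    · by_contra hb
      push_neg at hb
      have hone : (Pi.single i 1 : Fin n → F) ∈ LinearMap.range A.mulVecLin := by
        rw [hrange]; exact Submodule.mem_span_singleton_self _
      obtain ⟨x, hx⟩ := hone
      have hx0 : A.mulVec x = 0 := by
        rw [hmv x]
        simp [hb]
      have h2 : (Pi.single i 1 : Fin n → F) = 0 := by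
        rw [← hx, Matrix.mulVecLin_apply, hx0]
      simpa using congrFun h2 i
    · by_contra hbi
      have hev : A.mulVec (Pi.single i 1 : Fin n → F) =
          A i i • (Pi.single i 1 : Fin n → F) := by
        rw [hmv]
        congr 1
        simp [Pi.single_apply]
      have := hM A hAM (A i i) hbi _ hev
      have h1 : (Pi.single i 1 : Fin n → F) i = 0 := by rw [this]; rfl
      simp at h1
  choose b hb hbdiag A hAM hAx using key
  obtain ⟨k, hkpos, σ, hp, he, hinj, hchord⟩ := cycle_core hn (fun i j => b i j ≠ 0)
    (fun i hi => hi (hbdiag i)) hb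
  have hper : ∀ q t, σ (t + q * k) = σ t := by
    intro q
    induction q with
    | zero => simp
    | succ q ih => intro t; rw [Nat.succ_mul, ← Nat.add_assoc, hp, ih]
  have hσmod : ∀ t, σ ((t + 1) % k) = σ (t + 1) := by
    intro t
    conv_rhs => rw [← Nat.mod_add_div' (t + 1) k]
    rw [hper]
  set x : Fin n → F := ∑ t ∈ Finset.range k, Pi.single (σ t) 1 with hxdef
  set C : Matrix (Fin n) (Fin n) F :=
    ∑ t ∈ Finset.range k, (b (σ t) (σ (t + 1)))⁻¹ • A (σ t) with hCdef
  have hCM : C ∈ M := Submodule.sum_mem _ (fun t _ => Submodule.smul_mem _ _ (hAM _))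
  have hsum_mulVec : ∀ (s : Finset ℕ) (B : ℕ → Matrix (Fin n) (Fin n) F),
      (∑ t ∈ s, B t).mulVec x = ∑ t ∈ s, (B t).mulVec x := by
    intro s B
    induction s using Finset.induction with
    | empty => simp [Matrix.zero_mulVec]
    | @insert a s hnot ih =>
      rw [Finset.sum_insert hnot, Finset.sum_insert hnot, Matrix.add_mulVec, ih]
  have hsx : ∀ t, t ∈ Finset.range k → (∑ j, b (σ t) j * x j) = b (σ t) (σ (t + 1)) := by
    intro t ht
    calc ∑ j, b (σ t) j * x j
        = ∑ j, ∑ s ∈ Finset.range k, b (σ t) j * (Pi.single (σ s) 1 : Fin n → F) j := by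
          refine Finset.sum_congr rfl fun j _ => ?_
          rw [hxdef, Finset.sum_apply, Finset.mul_sum]
      _ = ∑ s ∈ Finset.range k, ∑ j, b (σ t) j * (Pi.single (σ s) 1 : Fin n → F) j :=
          Finset.sum_comm
      _ = ∑ s ∈ Finset.range k, b (σ t) (σ s) := by
          refine Finset.sum_congr rfl fun s _ => ?_
          simp [Pi.single_apply, mul_ite]
      _ = b (σ t) (σ (t + 1)) := by
          rw [← hσmod t]
          refine Finset.sum_eq_single_of_mem ((t + 1) % k)
            (Finset.mem_range.2 (Nat.mod_lt _ hkpos)) ?_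
          intro s hs hsne
          have hc := hchord t s (Finset.mem_range.1 ht) (Finset.mem_range.1 hs) hsne
          exact not_not.1 hc
  have hCx : C.mulVec x = (1 : F) • x := by
    rw [one_smul, hCdef, hsum_mulVec]
    calc ∑ t ∈ Finset.range k, ((b (σ t) (σ (t + 1)))⁻¹ • A (σ t)).mulVec x
        = ∑ t ∈ Finset.range k, (Pi.single (σ t) 1 : Fin n → F) := by
          refine Finset.sum_congr rfl fun t ht => ?_
          rw [Matrix.smul_mulVec, hAx, hsx t ht, smul_smul,
            inv_mul_cancel₀ (he t), one_smul]
      _ = x := hxdef.symm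
  have hx0 : x = 0 := hM C hCM 1 one_ne_zero x hCx
  have hx1 : x (σ 0) = 1 := by
    rw [hxdef, Finset.sum_apply]
    rw [Finset.sum_eq_single_of_mem 0 (Finset.mem_range.2 hkpos)]
    · simp
    · intro t ht htne
      have : σ 0 ≠ σ t := hinj 0 t (Nat.pos_of_ne_zero htne) (Finset.mem_range.1 ht)
      simp [Pi.single_apply, this.symm]
  rw [hx0] at hx1
  simp at hx1
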